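/- Let Ω ⊂ ℝ² be open, b : Ω → ℝ² locally Lipschitz continuous, and let λ > 0, ε > 0, M ≥ 0. Let u : Ω → ℝ be bounded, upper semicontinuous, and a viscosity subsolution of λu − ε⁻¹ b·Du − M = 0 in Ω. Let X : ℝ → Ω be a C¹ solution of X′(t) = b(X(t)) that is periodic with period T > 0 (X(t+T) = X(t) for all t). Set C = max{M, sup_Ω |u|}. Then for any two points x = X(s) and y = X(s′) on the orbit, |u(x) − u(y)| ≤ 2 ε C (λ + 1) T. -/

import Mathlib

open Filter Topology Set Metric

set_option maxHeartbeats 1000000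

noncomputable section

/-- The plane `ℝ²` as a Euclidean space. -/
abbrev E2 : Type := EuclideanSpace ℝ (Fin 2)

theorem usc_exists_max {γ : Type*} [TopologicalSpace γ] {f : γ → ℝ} {s : Set γ}
    (hs : IsCompact s) (hne : s.Nonempty) (hf : UpperSemicontinuousOn f s) :
    ∃ x ∈ s, ∀ y ∈ s, f y ≤ f x := by
  by_contra h
  push_neg at h
  have h' : ∀ x ∈ s, ∃ y ∈ s, f x < f y := by
    intro x hx
    obtain ⟨y, hy, hlt⟩ := h x hx
    exact ⟨y, hy, hlt⟩
  choose! g hgs hgf using h'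
  have h2 : ∀ x ∈ s, ∃ V : Set γ, IsOpen V ∧ x ∈ V ∧ ∀ z ∈ V ∩ s, f z < f (g x) := by
    intro x hx
    have := hf x hx (f (g x)) (hgf x hx)
    rw [eventually_nhdsWithin_iff] at this
    obtain ⟨V, hVsub, hVopen, hxV⟩ := eventually_nhds_iff.1 this
    exact ⟨V, hVopen, hxV, fun z hz => hVsub z hz.1 hz.2⟩
  choose! V hVopen hxV hVlt using h2
  obtain ⟨t, hcov⟩ := hs.elim_nhds_subcover' (fun x _ => V x)
    (fun x hx => (hVopen x hx).mem_nhds (hxV x hx))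
  have htne : t.Nonempty := by
    obtain ⟨x₀, hx₀⟩ := hne
    obtain ⟨y, hy, -⟩ := mem_iUnion₂.1 (hcov hx₀)
    exact ⟨y, hy⟩
  obtain ⟨xm, hxmt, hxmmax⟩ := t.exists_max_image (fun x => f (g x.1)) htne
  have hz : g xm.1 ∈ s := hgs xm.1 xm.2
  obtain ⟨w, hwt, hwV⟩ := mem_iUnion₂.1 (hcov hz)
  have := hVlt w.1 w.2 (g xm.1) ⟨hwV, hz⟩
  exact absurd (this.trans_le (hxmmax w hwt)) (lt_irrefl _)

theorem visc_key
    (Ω : Set E2) (hΩ : IsOpen Ω)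
    (b : E2 → E2)
    (hb : ∀ x ∈ Ω, ∃ K : NNReal, ∃ s ∈ nhdsWithin x Ω, LipschitzOnWith K b s)
    (lam ep M : ℝ) (hlam : 0 < lam) (hep : 0 < ep)
    (u : E2 → ℝ) (C : ℝ) (hC : ∀ x ∈ Ω, |u x| ≤ C)
    (hu : UpperSemicontinuousOn u Ω)
    (husub : ∀ φ : E2 → ℝ, ContDiff ℝ 1 φ → ∀ z ∈ Ω,
      IsLocalMaxOn (fun x => u x - φ x) Ω z →
      lam * u z - ep⁻¹ * (inner ℝ (b z) (gradient φ z) : ℝ) - M ≤ 0)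
    (X : ℝ → E2) (hXΩ : ∀ t : ℝ, X t ∈ Ω)
    (hX : ∀ t : ℝ, HasDerivAt X (b (X t)) t)
    (c' t₀ δ : ℝ) (hδ : 0 < δ)
    (hmax : ∀ t, |t - t₀| ≤ δ → u (X t) + c' * t ≤ u (X t₀) + c' * t₀) :
    lam * u (X t₀) + ep⁻¹ * c' - M ≤ 0 := by
  have hepi : (0:ℝ) < ep⁻¹ := inv_pos.2 hep
  set z₀ := X t₀ with hz₀def
  have hz₀ : z₀ ∈ Ω := hXΩ t₀
  have hUat : ∀ x ∈ Ω, ∀ γ : ℝ, u x < γ → ∀ᶠ x' in 𝓝 x, u x' < γ := by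
    intro x hx γ hγ
    have h1 := hu x hx γ hγ
    rwa [nhdsWithin_eq_nhds.2 (hΩ.mem_nhds hx)] at h1
  obtain ⟨K, sK, hsKmem, hLip⟩ := hb z₀ hz₀
  have hsK' : sK ∩ Ω ∈ 𝓝 z₀ := by
    rw [nhdsWithin_eq_nhds.2 (hΩ.mem_nhds hz₀)] at hsKmem
    exact Filter.inter_mem hsKmem (hΩ.mem_nhds hz₀)
  obtain ⟨r, hr0, hrsub⟩ := Metric.nhds_basis_closedBall.mem_iff.1 hsK'
  have hXc : ContinuousAt X t₀ := (hX t₀).continuousAt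
  obtain ⟨δ₁, hδ₁0, hδ₁⟩ := Metric.continuousAt_iff.1 hXc (r/4) (by positivity)
  set δ₂ := min δ (δ₁/2) with hδ₂def
  have hδ₂0 : 0 < δ₂ := lt_min hδ (by positivity)
  have hδ₂δ : δ₂ ≤ δ := min_le_left _ _
  have hXnear : ∀ t, |t - t₀| ≤ δ₂ → dist (X t) z₀ < r/4 := by
    intro t ht
    have h1 : dist t t₀ < δ₁ := by
      rw [Real.dist_eq]
      have h2 : δ₂ ≤ δ₁/2 := min_le_right _ _
      linarith [ht]
    exact hδ₁ h1
  set Q : Set (E2 × ℝ) := closedBall z₀ r ×ˢ Icc (t₀ - δ₂) (t₀ + δ₂) with hQdef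
  have hQcomp : IsCompact Q := (isCompact_closedBall _ _).prod isCompact_Icc
  have hQ0mem : (z₀, t₀) ∈ Q := by
    refine ⟨mem_closedBall_self hr0.le, ?_, ?_⟩ <;> simp <;> linarith
  have hQne : Q.Nonempty := ⟨(z₀, t₀), hQ0mem⟩
  have hQΩ : ∀ p : E2 × ℝ, p ∈ Q → p.1 ∈ Ω := fun p hp => (hrsub hp.1).2
  have hXcont : Continuous X := continuous_iff_continuousAt.2 fun t => (hX t).continuousAt
  set F : ℕ → E2 × ℝ → ℝ :=
    fun n p => u p.1 + (c' * p.2 - ((n:ℝ)+1) * ‖p.1 - X p.2‖^2 - (p.2 - t₀)^2) with hFdef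
  have hFusc : ∀ n, UpperSemicontinuousOn (F n) Q := by
    intro n
    apply UpperSemicontinuousOn.add
    · intro p hp
      have h1 : UpperSemicontinuousAt u p.1 := fun γ hγ => hUat p.1 (hQΩ p hp) γ hγ
      exact UpperSemicontinuousAt.upperSemicontinuousWithinAt (s := Q) (UpperSemicontinuousAt.comp h1 continuousAt_fst)
    · exact (Continuous.upperSemicontinuous (by fun_prop)).upperSemicontinuousOn Q
  have hmaxex : ∀ n, ∃ p ∈ Q, ∀ q ∈ Q, F n q ≤ F n p :=
    fun n => usc_exists_max hQcomp hQne (hFusc n)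
  choose pt hptQ hptmax using hmaxex
  have hyQ : ∀ n, (pt n).1 ∈ closedBall z₀ r := fun n => (hptQ n).1
  have hτQ : ∀ n, (pt n).2 ∈ Icc (t₀ - δ₂) (t₀ + δ₂) := fun n => (hptQ n).2
  have hτabs : ∀ n, |(pt n).2 - t₀| ≤ δ₂ := fun n =>
    abs_le.2 ⟨by linarith [(hτQ n).1], by linarith [(hτQ n).2]⟩
  set P : ℕ → ℝ := fun n => ((n:ℝ)+1) * ‖(pt n).1 - X (pt n).2‖^2 + ((pt n).2 - t₀)^2 with hPdef
  set S : ℕ → ℝ := fun n => u (pt n).1 + c' * (pt n).2 - (u z₀ + c' * t₀) with hSdef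
  have hPnn : ∀ n, 0 ≤ P n := fun n => by positivity
  have hPS : ∀ n, P n ≤ S n := by
    intro n
    have h1 := hptmax n (z₀, t₀) hQ0mem
    simp only [F, hz₀def, sub_self, norm_zero] at h1
    simp only [P, S]
    nlinarith [h1]
  have hSB : ∀ n, S n ≤ 2*C + |c'| * δ₂ := by
    intro n
    have h1 : u (pt n).1 ≤ C := (abs_le.1 (hC _ (hQΩ _ (hptQ n)))).2
    have h2 : -C ≤ u z₀ := (abs_le.1 (hC _ hz₀)).1
    have h3 : c' * (pt n).2 - c' * t₀ ≤ |c'| * δ₂ := by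
      have he : c' * (pt n).2 - c' * t₀ = c' * ((pt n).2 - t₀) := by ring
      rw [he]
      calc c' * ((pt n).2 - t₀) ≤ |c' * ((pt n).2 - t₀)| := le_abs_self _
        _ = |c'| * |(pt n).2 - t₀| := abs_mul _ _
        _ ≤ |c'| * δ₂ := mul_le_mul_of_nonneg_left (hτabs n) (abs_nonneg _)
    simp only [S]; linarith
  have hqsq : ∀ n, ‖(pt n).1 - X (pt n).2‖^2 ≤ (2*C + |c'| * δ₂) / ((n:ℝ)+1) := by
    intro n
    rw [le_div_iff₀ (by positivity)]
    have h1 := hPS n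
    have h2 := hSB n
    simp only [P] at h1
    nlinarith [sq_nonneg ((pt n).2 - t₀)]
  have hdiv : Tendsto (fun n : ℕ => (2*C + |c'| * δ₂) / ((n:ℝ)+1)) atTop (𝓝 0) := by
    simp only [div_eq_mul_inv]
    have h1 : Tendsto (fun n : ℕ => ((n:ℝ)+1)) atTop atTop :=
      tendsto_atTop_add_const_right _ 1 tendsto_natCast_atTop_atTop
    have h2 := h1.inv_tendsto_atTop
    simpa using h2.const_mul (2*C + |c'| * δ₂)
  have hqnorm : Tendsto (fun n => ‖(pt n).1 - X (pt n).2‖) atTop (𝓝 0) := by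
    have h1 : Tendsto (fun n => ‖(pt n).1 - X (pt n).2‖^2) atTop (𝓝 0) :=
      squeeze_zero (fun n => by positivity) hqsq hdiv
    have h2 := (Real.continuous_sqrt.tendsto 0).comp h1
    rw [Real.sqrt_zero] at h2
    exact h2.congr fun n => by simp [Real.sqrt_sq (norm_nonneg _)]
  obtain ⟨tb, htbmem, φs, hφmono, hφtend⟩ := isCompact_Icc.tendsto_subseq hτQ
  have htbabs : |tb - t₀| ≤ δ₂ := abs_le.2 ⟨by linarith [htbmem.1], by linarith [htbmem.2]⟩
  have hXtb : Tendsto (fun k => X ((pt (φs k)).2)) atTop (𝓝 (X tb)) :=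
    ((hX tb).continuousAt.tendsto).comp hφtend
  have hqφ : Tendsto (fun k => (pt (φs k)).1 - X ((pt (φs k)).2)) atTop (𝓝 0) := by
    rw [tendsto_zero_iff_norm_tendsto_zero]
    exact hqnorm.comp hφmono.tendsto_atTop
  have hytend : Tendsto (fun k => (pt (φs k)).1) atTop (𝓝 (X tb)) := by
    have h1 := hqφ.add hXtb
    simpa using h1
  have hSsmall : ∀ γ : ℝ, 0 < γ → ∀ᶠ k in atTop, S (φs k) < γ := by
    intro γ hγ
    have hb1 : ∀ᶠ k in atTop, u ((pt (φs k)).1) < u (X tb) + γ/2 :=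
      hytend.eventually (hUat (X tb) (hXΩ tb) (u (X tb) + γ/2) (by linarith))
    have hb2 : ∀ᶠ k in atTop, c' * (pt (φs k)).2 < c' * tb + γ/2 :=
      (hφtend.const_mul c').eventually_lt_const (by linarith)
    filter_upwards [hb1, hb2] with k h1 h2
    have h3 := hmax tb (le_trans htbabs hδ₂δ)
    simp only [S]
    simp only [hz₀def] at *
    linarith
  have hStend : Tendsto (fun k => S (φs k)) atTop (𝓝 0) := by
    refine tendsto_order.2 ⟨fun a ha => ?_, fun a ha => hSsmall a ha⟩
    exact Eventually.of_forall fun k => lt_of_lt_of_le ha ((hPnn _).trans (hPS _))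
  have hPtend : Tendsto (fun k => P (φs k)) atTop (𝓝 0) :=
    squeeze_zero (fun k => hPnn _) (fun k => hPS _) hStend
  have hP'tend : Tendsto
      (fun k => ((φs k : ℝ)+1) * ‖(pt (φs k)).1 - X ((pt (φs k)).2)‖^2) atTop (𝓝 0) := by
    refine squeeze_zero (fun k => by positivity) (fun k => ?_) hPtend
    simp only [P]
    nlinarith [sq_nonneg ((pt (φs k)).2 - t₀)]
  have hτtend0 : Tendsto (fun k => |(pt (φs k)).2 - t₀|) atTop (𝓝 0) := by
    have h1 : Tendsto (fun k => ((pt (φs k)).2 - t₀)^2) atTop (𝓝 0) := by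
      refine squeeze_zero (fun k => sq_nonneg _) (fun k => ?_) hPtend
      simp only [P]
      nlinarith [mul_nonneg (by positivity : (0:ℝ) ≤ ((φs k:ℝ)+1))
        (sq_nonneg ‖(pt (φs k)).1 - X ((pt (φs k)).2)‖)]
    have h2 := (Real.continuous_sqrt.tendsto 0).comp h1
    rw [Real.sqrt_zero] at h2
    exact h2.congr fun n => by simp [Real.sqrt_sq_eq_abs]
  have hKnn : (0:ℝ) ≤ (K:ℝ) := K.coe_nonneg
  set D := lam * |c'| + 2*ep⁻¹ + 2*ep⁻¹*(K:ℝ) + 1 with hDdef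
  have hD0 : 0 < D := by positivity
  refine le_of_forall_pos_le_add ?_
  intro γ hγ
  have e1 : ∀ᶠ k in atTop, |(pt (φs k)).2 - t₀| < δ₂ := hτtend0.eventually_lt_const hδ₂0
  have e2 : ∀ᶠ k in atTop, ‖(pt (φs k)).1 - X ((pt (φs k)).2)‖ < r/2 :=
    (hqnorm.comp hφmono.tendsto_atTop).eventually_lt_const (by positivity)
  have e3 : ∀ᶠ k in atTop, |(pt (φs k)).2 - t₀| < γ/(2*D) :=
    hτtend0.eventually_lt_const (by positivity)
  have e4 : ∀ᶠ k in atTop,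
      ((φs k : ℝ)+1) * ‖(pt (φs k)).1 - X ((pt (φs k)).2)‖^2 < γ/(2*D) :=
    hP'tend.eventually_lt_const (by positivity)
  obtain ⟨k, hk⟩ := (((e1.and e2).and e3).and e4).exists
  obtain ⟨⟨⟨h1, h2⟩, h3⟩, h4⟩ := hk
  set n := φs k with hndef
  set a : ℝ := (n:ℝ) + 1 with hadef
  have ha0 : 0 < a := by positivity
  set yy := (pt n).1 with hyydef
  set tt := (pt n).2 with httdef
  -- interiority
  have htt2 : |tt - t₀| ≤ δ₂ := (hτabs n)
  have hXttnear : dist (X tt) z₀ < r/4 := hXnear tt htt2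
  have hin : yy ∈ ball z₀ r := by
    have htri : dist yy z₀ ≤ dist yy (X tt) + dist (X tt) z₀ := dist_triangle _ _ _
    have hd : dist yy (X tt) < r/2 := by rwa [dist_eq_norm]
    have : dist yy z₀ < r := by linarith
    exact this
  have hyΩ : yy ∈ Ω := (hrsub (hyQ n)).2
  -- spatial test function
  set ψ : E2 → ℝ := fun x => a * ‖x - X tt‖^2 with hψdef
  have hsub1 : ContDiff ℝ 1 (fun x : E2 => x - X tt) := contDiff_id.sub contDiff_const
  have hsub2 : ContDiff ℝ 1 (fun x : E2 => ‖x - X tt‖^2) := hsub1.norm_sq ℝ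
  have hψC1 : ContDiff ℝ 1 ψ := contDiff_const.mul hsub2
  have hψgrad : gradient ψ yy = (2*a) • (yy - X tt) := by
    have hF1 : HasFDerivAt (fun x : E2 => ‖x - X tt‖^2)
        (2 • innerSL ℝ (yy - X tt)) yy := by
      have h0 := ((hasFDerivAt_id yy).sub_const (X tt)).norm_sq
      simpa using h0
    have h0 : (InnerProductSpace.toDual ℝ E2) ((2*a) • (yy - X tt))
        = a • (2 • innerSL ℝ (yy - X tt)) := by
      ext v
      simp only [InnerProductSpace.toDual_apply_apply, ContinuousLinearMap.smul_apply,
        innerSL_apply_apply, real_inner_smul_left, smul_eq_mul, nsmul_eq_mul, Nat.cast_ofNat]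
      ring
    have hG : HasGradientAt ψ ((2*a) • (yy - X tt)) yy :=
      hasGradientAt_iff_hasFDerivAt.mpr (by rw [h0]; exact hF1.const_mul a)
    exact hG.gradient
  have hlocmax : IsLocalMaxOn (fun x => u x - ψ x) Ω yy := by
    have hballmem : ball z₀ r ∈ 𝓝[Ω] yy :=
      mem_nhdsWithin_of_mem_nhds (isOpen_ball.mem_nhds hin)
    filter_upwards [hballmem] with x hx
    have hmem : (x, tt) ∈ Q := ⟨ball_subset_closedBall hx, hτQ n⟩
    have h5 := hptmax n (x, tt) hmem
    simp only [F] at h5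
    simp only [ψ]
    nlinarith [h5]
  have hsub := husub ψ hψC1 yy hyΩ hlocmax
  rw [hψgrad, real_inner_smul_right] at hsub
  -- temporal derivative
  have hloc : IsLocalMax (fun t => c' * t - a * ‖yy - X t‖^2 - (t - t₀)^2) tt := by
    have hIcc : Icc (t₀ - δ₂) (t₀ + δ₂) ∈ 𝓝 tt := by
      apply Icc_mem_nhds
      · have := abs_lt.1 h1
        linarith [this.1]
      · have := abs_lt.1 h1
        linarith [this.2]
    filter_upwards [hIcc] with t ht
    have h5 := hptmax n (yy, t) ⟨hyQ n, ht⟩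
    simp only [F] at h5
    rw [← hadef, ← hyydef, ← httdef] at h5
    linarith
  have hderiv : HasDerivAt (fun t => c' * t - a * ‖yy - X t‖^2 - (t - t₀)^2)
      (c' - a * (2 * (inner ℝ (yy - X tt) ((0:E2) - b (X tt)) : ℝ)) - (2 * (tt - t₀))) tt := by
    have hd1 : HasDerivAt (fun t : ℝ => c' * t) c' tt := by
      simpa using (hasDerivAt_id tt).const_mul c'
    have hd2 : HasDerivAt (fun t => ‖yy - X t‖^2)
        (2 * (inner ℝ (yy - X tt) ((0:E2) - b (X tt)) : ℝ)) tt :=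
      ((hasDerivAt_const tt yy).sub (hX tt)).norm_sq
    have hd3 : HasDerivAt (fun t : ℝ => (t - t₀)^2) (2 * (tt - t₀)) tt := by
      have h0 := ((hasDerivAt_id tt).sub_const t₀).fun_pow 2
      simpa using h0
    exact (hd1.sub (hd2.const_mul a)).sub hd3
  have hzero := hloc.hasDerivAt_eq_zero hderiv
  have hinner_eq : 2*a*(inner ℝ (yy - X tt) (b (X tt)) : ℝ) = 2*(tt - t₀) - c' := by
    have h5 : (inner ℝ (yy - X tt) ((0:E2) - b (X tt)) : ℝ)
        = -(inner ℝ (yy - X tt) (b (X tt)) : ℝ) := by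
      rw [zero_sub, inner_neg_right]
    rw [h5] at hzero
    linarith [hzero]
  -- Lipschitz estimate
  have hXttS : X tt ∈ sK := by
    have : X tt ∈ closedBall z₀ r := by
      have : dist (X tt) z₀ ≤ r := by linarith
      exact this
    exact (hrsub this).1
  have hyyS : yy ∈ sK := (hrsub (hyQ n)).1
  have hLipb : ‖b yy - b (X tt)‖ ≤ (K:ℝ) * ‖yy - X tt‖ := by
    have h5 := hLip.dist_le_mul yy hyyS (X tt) hXttS
    rwa [dist_eq_norm, dist_eq_norm] at h5
  have hinner2 : (inner ℝ (b yy) (yy - X tt) : ℝ)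
      ≤ (inner ℝ (b (X tt)) (yy - X tt) : ℝ) + (K:ℝ) * ‖yy - X tt‖^2 := by
    have h6 : (inner ℝ (b yy) (yy - X tt) : ℝ) - (inner ℝ (b (X tt)) (yy - X tt) : ℝ)
        = (inner ℝ (b yy - b (X tt)) (yy - X tt) : ℝ) := (inner_sub_left _ _ _).symm
    have h7 : (inner ℝ (b yy - b (X tt)) (yy - X tt) : ℝ)
        ≤ ‖b yy - b (X tt)‖ * ‖yy - X tt‖ := real_inner_le_norm _ _
    have h8 : ‖b yy - b (X tt)‖ * ‖yy - X tt‖ ≤ (K:ℝ) * ‖yy - X tt‖^2 := by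
      calc ‖b yy - b (X tt)‖ * ‖yy - X tt‖
          ≤ (K:ℝ) * ‖yy - X tt‖ * ‖yy - X tt‖ :=
            mul_le_mul_of_nonneg_right hLipb (norm_nonneg _)
        _ = (K:ℝ) * ‖yy - X tt‖^2 := by ring
    linarith
  have hfin1 : 2*a*(inner ℝ (b yy) (yy - X tt) : ℝ)
      ≤ 2*(tt - t₀) - c' + 2*(K:ℝ)*(a * ‖yy - X tt‖^2) := by
    have h8 : (inner ℝ (b (X tt)) (yy - X tt) : ℝ) = (inner ℝ (yy - X tt) (b (X tt)) : ℝ) :=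
      real_inner_comm _ _
    have h9 := mul_le_mul_of_nonneg_left hinner2 (by positivity : (0:ℝ) ≤ 2*a)
    rw [h8] at h9
    nlinarith [h9, hinner_eq]
  have hmain : lam * u yy + ep⁻¹ * c' - M
      ≤ ep⁻¹ * (2*|tt - t₀| + 2*(K:ℝ)*(a * ‖yy - X tt‖^2)) := by
    have h9 := mul_le_mul_of_nonneg_left hfin1 hepi.le
    have h10 : 2*(tt - t₀) ≤ 2*|tt - t₀| := by
      have := le_abs_self (tt - t₀); linarith
    have h11 := mul_le_mul_of_nonneg_left
      (by linarith : 2*(tt - t₀) - c' + 2*(K:ℝ)*(a * ‖yy - X tt‖^2)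
        ≤ 2*|tt - t₀| - c' + 2*(K:ℝ)*(a * ‖yy - X tt‖^2)) hepi.le
    have h12 : ep⁻¹ * (2*|tt - t₀| - c' + 2*(K:ℝ)*(a * ‖yy - X tt‖^2))
        = ep⁻¹ * (2*|tt - t₀| + 2*(K:ℝ)*(a * ‖yy - X tt‖^2)) - ep⁻¹ * c' := by ring
    have h13 : ep⁻¹ * (2*a*(inner ℝ (b yy) (yy - X tt) : ℝ))
        = ep⁻¹ * (2*a) * (inner ℝ (b yy) (yy - X tt) : ℝ) := by ring
    -- hsub : lam * u yy - ep⁻¹ * (2*a * inner ℝ (b yy) (yy - X tt)) - M ≤ 0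
    nlinarith [hsub, h9, h11]
  have hlow : u z₀ - u yy ≤ |c'| * |tt - t₀| := by
    have h11 := hPS n
    have h12 := hPnn n
    have h14 : c' * tt - c' * t₀ ≤ |c'| * |tt - t₀| := by
      calc c' * tt - c' * t₀ = c' * (tt - t₀) := by ring
        _ ≤ |c' * (tt - t₀)| := le_abs_self _
        _ = |c'| * |tt - t₀| := by rw [abs_mul]
    simp only [S] at h11
    rw [← hyydef, ← httdef] at h11
    linarith [hPnn n]
  have hg2 : (0:ℝ) < γ/(2*D) := by positivity
  have hc2 : lam * (u z₀ - u yy) ≤ lam * (|c'| * (γ/(2*D))) := by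
    have := mul_le_mul_of_nonneg_left h3.le (abs_nonneg c')
    have h15 := hlow.trans this
    exact mul_le_mul_of_nonneg_left h15 hlam.le
  have hc1 : ep⁻¹ * (2*|tt - t₀| + 2*(K:ℝ)*(a * ‖yy - X tt‖^2))
      ≤ ep⁻¹ * (2*(γ/(2*D)) + 2*(K:ℝ)*(γ/(2*D))) := by
    apply mul_le_mul_of_nonneg_left _ hepi.le
    have h16 := mul_le_mul_of_nonneg_left h4.le (by positivity : (0:ℝ) ≤ 2*(K:ℝ))
    linarith [h3.le]
  have hring : lam * u z₀ = lam * (u z₀ - u yy) + lam * u yy := by ring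
  have htot : lam * u z₀ + ep⁻¹ * c' - M
      ≤ lam * (|c'| * (γ/(2*D))) + ep⁻¹ * (2*(γ/(2*D)) + 2*(K:ℝ)*(γ/(2*D))) := by
    linarith [hmain, hc2, hc1]
  have hfinal : lam * (|c'| * (γ/(2*D))) + ep⁻¹ * (2*(γ/(2*D)) + 2*(K:ℝ)*(γ/(2*D))) ≤ γ := by
    have h17 : lam * (|c'| * (γ/(2*D))) + ep⁻¹ * (2*(γ/(2*D)) + 2*(K:ℝ)*(γ/(2*D)))
        = (lam * |c'| + 2*ep⁻¹ + 2*ep⁻¹*(K:ℝ)) * (γ/(2*D)) := by ring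
    rw [h17]
    have h18 : (lam * |c'| + 2*ep⁻¹ + 2*ep⁻¹*(K:ℝ)) * (γ/(2*D)) ≤ D * (γ/(2*D)) := by
      apply mul_le_mul_of_nonneg_right _ hg2.le
      simp only [hDdef]; linarith
    have h19 : D * (γ/(2*D)) = γ/2 := by
      field_simp
    linarith
  linarith [htot, hfinal]

theorem comp_lemma
    (Ω : Set E2) (hΩ : IsOpen Ω)
    (b : E2 → E2)
    (hb : ∀ x ∈ Ω, ∃ K : NNReal, ∃ s ∈ nhdsWithin x Ω, LipschitzOnWith K b s)
    (lam ep M : ℝ) (hlam : 0 < lam) (hep : 0 < ep)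
    (u : E2 → ℝ) (C : ℝ) (hC : ∀ x ∈ Ω, |u x| ≤ C) (hC0 : 0 ≤ C) (hMC : M ≤ C)
    (hu : UpperSemicontinuousOn u Ω)
    (husub : ∀ φ : E2 → ℝ, ContDiff ℝ 1 φ → ∀ z ∈ Ω,
      IsLocalMaxOn (fun x => u x - φ x) Ω z →
      lam * u z - ep⁻¹ * (inner ℝ (b z) (gradient φ z) : ℝ) - M ≤ 0)
    (X : ℝ → E2) (hXΩ : ∀ t : ℝ, X t ∈ Ω)
    (hX : ∀ t : ℝ, HasDerivAt X (b (X t)) t)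
    (a2 b2 : ℝ) (hab : a2 ≤ b2) :
    u (X a2) ≤ u (X b2) + ep * C * (lam + 1) * (b2 - a2) := by
  have key : ∀ η : ℝ, 0 < η →
      u (X a2) ≤ u (X b2) + ep * C * (lam + 1) * (b2 - a2) + ep * η * (b2 - a2) := by
    intro η hη
    set c' := ep * C * (lam + 1) + ep * η with hc'def
    have hc'0 : 0 < c' := by positivity
    set R := (2*C + 1)/c' with hRdef
    have hR0 : 0 < R := by positivity
    have husc : UpperSemicontinuousOn (fun t => u (X t) + c' * t) (Icc (b2 - R) b2) := by
      apply UpperSemicontinuousOn.add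
      · intro t _
        have h1 : UpperSemicontinuousAt u (X t) := by
          intro γ hγ
          have h2 := hu (X t) (hXΩ t) γ hγ
          rwa [nhdsWithin_eq_nhds.2 (hΩ.mem_nhds (hXΩ t))] at h2
        exact UpperSemicontinuousAt.upperSemicontinuousWithinAt (s := _) (UpperSemicontinuousAt.comp h1 (hX t).continuousAt)
      · exact (Continuous.upperSemicontinuous (by fun_prop)).upperSemicontinuousOn _
    obtain ⟨t₀, ht₀mem, ht₀max⟩ :=
      usc_exists_max isCompact_Icc (nonempty_Icc.2 (by linarith)) husc
    have hglob : ∀ t, t ≤ b2 → u (X t) + c' * t ≤ u (X t₀) + c' * t₀ := by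
      intro t ht
      rcases le_or_gt (b2 - R) t with h | h
      · exact ht₀max t ⟨h, ht⟩
      · have h1 : u (X t) ≤ C := (abs_le.1 (hC _ (hXΩ t))).2
        have h2 : -C ≤ u (X b2) := (abs_le.1 (hC _ (hXΩ b2))).1
        have hb2mem : b2 ∈ Icc (b2 - R) b2 := ⟨by linarith, le_refl _⟩
        have h3 := ht₀max b2 hb2mem
        have h4 : c' * t ≤ c' * (b2 - R) := mul_le_mul_of_nonneg_left (by linarith) hc'0.le
        have h5 : c' * R = 2*C + 1 := by
          rw [hRdef]
          field_simp
        have h6 : c' * (b2 - R) = c' * b2 - c' * R := by ring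
        linarith
    rcases eq_or_lt_of_le ht₀mem.2 with heq | hlt
    · have h6 := hglob a2 hab
      rw [heq] at h6
      have h7 : c' * (b2 - a2) = c' * b2 - c' * a2 := by ring
      have h8 : c' * (b2 - a2) = ep * C * (lam + 1) * (b2 - a2) + ep * η * (b2 - a2) := by
        rw [hc'def]; ring
      linarith
    · exfalso
      have hδ : 0 < b2 - t₀ := by linarith
      have hmax' : ∀ t, |t - t₀| ≤ b2 - t₀ → u (X t) + c' * t ≤ u (X t₀) + c' * t₀ := by
        intro t ht
        have := (abs_le.1 ht).2
        exact hglob t (by linarith)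
      have hkey := visc_key Ω hΩ b hb lam ep M hlam hep u C hC hu husub X hXΩ hX
        c' t₀ (b2 - t₀) hδ hmax'
      have h7 : -C ≤ u (X t₀) := (abs_le.1 (hC _ (hXΩ t₀))).1
      have h8 : lam * (-C) ≤ lam * u (X t₀) := mul_le_mul_of_nonneg_left h7 hlam.le
      have h9 : ep⁻¹ * c' = C * (lam + 1) + η := by
        rw [hc'def]
        field_simp
      have h10 : C * (lam + 1) = lam * C + C := by ring
      have h11 : lam * (-C) = -(lam * C) := by ring
      linarith
  rcases eq_or_lt_of_le hab with heq | hlt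
  · rw [heq]
    simp
  · refine le_of_forall_pos_le_add ?_
    intro ε hε
    have hba : 0 < b2 - a2 := by linarith
    have hη : 0 < ε / (ep * (b2 - a2)) := div_pos hε (mul_pos hep hba)
    have h12 := key _ hη
    have heq2 : ep * (ε / (ep * (b2 - a2))) * (b2 - a2) = ε := by
      field_simp [(mul_pos hep hba).ne']
    linarith

/-- Quantitative almost-constancy along periodic orbits: if `u` is a
bounded upper semicontinuous viscosity subsolution of `λ u − ε⁻¹ b·Du − M = 0` in `Ω`
and `X` is a `T`-periodic orbit of `b` in `Ω`, then with `C = max{M, sup_Ω |u|}` one has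
`|u(X(s)) − u(X(s'))| ≤ 2 ε C (λ + 1) T` for all `s, s'`. -/
theorem oscillation_along_periodic_orbit
    (Ω : Set E2) (hΩ : IsOpen Ω)
    (b : E2 → E2)
    (hb : ∀ x ∈ Ω, ∃ K : NNReal, ∃ s ∈ nhdsWithin x Ω, LipschitzOnWith K b s)
    (lam ep M : ℝ) (hlam : 0 < lam) (hep : 0 < ep) (hM : 0 ≤ M)
    (u : E2 → ℝ) (hub : ∃ C : ℝ, ∀ x ∈ Ω, |u x| ≤ C)
    (hu : UpperSemicontinuousOn u Ω)
    (husub : ∀ φ : E2 → ℝ, ContDiff ℝ 1 φ → ∀ z ∈ Ω,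
      IsLocalMaxOn (fun x => u x - φ x) Ω z →
      lam * u z - ep⁻¹ * (inner ℝ (b z) (gradient φ z) : ℝ) - M ≤ 0)
    (X : ℝ → E2) (hXΩ : ∀ t : ℝ, X t ∈ Ω)
    (hX : ∀ t : ℝ, HasDerivAt X (b (X t)) t)
    (T : ℝ) (hT : 0 < T) (hper : Function.Periodic X T) :
    ∀ s s' : ℝ,
      |u (X s) - u (X s')| ≤
        2 * ep * max M (sSup ((fun x => |u x|) '' Ω)) * (lam + 1) * T := by
  intro s s'
  obtain ⟨C₀, hC₀⟩ := hub
  have hbdd : BddAbove ((fun x => |u x|) '' Ω) := by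
    refine ⟨C₀, ?_⟩
    rintro y ⟨x, hx, rfl⟩
    exact hC₀ x hx
  set C := max M (sSup ((fun x => |u x|) '' Ω)) with hCdef
  have hC : ∀ x ∈ Ω, |u x| ≤ C := fun x hx =>
    le_max_of_le_right (le_csSup hbdd ⟨x, hx, rfl⟩)
  have hMC : M ≤ C := le_max_left _ _
  have hC0 : 0 ≤ C := le_trans hM hMC
  have hcoef0 : 0 ≤ ep * C * (lam + 1) := by positivity
  have hkey : ∀ p q : ℝ, u (X p) - u (X q) ≤ ep * C * (lam + 1) * T := by
    intro p q
    set k : ℤ := ⌈(p - q) / T⌉ with hkdef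
    have h1 : (p - q) / T ≤ (k:ℝ) := Int.le_ceil _
    have h2 : (k:ℝ) < (p - q)/T + 1 := Int.ceil_lt_add_one _
    have h3 : p ≤ q + k * T := by
      rw [div_le_iff₀ hT] at h1
      linarith
    have h4 : q + k*T - p ≤ T := by
      have h5 : (k:ℝ) * T < ((p - q)/T + 1) * T := mul_lt_mul_of_pos_right h2 hT
      have h6 : ((p-q)/T + 1) * T = (p - q) + T := by
        rw [add_mul, div_mul_cancel₀ _ hT.ne', one_mul]
      linarith
    have hXq : X (q + k*T) = X q := (hper.int_mul k) q
    have h7 := comp_lemma Ω hΩ b hb lam ep M hlam hep u C hC hC0 hMC hu husub X hXΩ hX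
      p (q + k*T) h3
    rw [hXq] at h7
    have h8 : ep * C * (lam+1) * (q + k*T - p) ≤ ep*C*(lam+1)*T :=
      mul_le_mul_of_nonneg_left h4 hcoef0
    linarith
  have hbound : |u (X s) - u (X s')| ≤ ep * C * (lam + 1) * T :=
    abs_sub_le_iff.2 ⟨hkey s s', hkey s' s⟩
  have hx0 : 0 ≤ ep * C * (lam+1) * T := by positivity
  linarith
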